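/- Let Q ⊂ ℝ³ be a cube, u ∈ H¹(Q) nonnegative, ρ = u², and let S̃ > 0 be a Poincaré–Sobolev constant such that ∫_Q |∇u|² ≥ S̃ ‖u − |Q|^{−1}∫_Q u‖_{L⁶(Q)}² for all cubes (independent of size and location by scaling). Then ∫_Q |∇√ρ|² dx ≥ (S̃/2)·(∫_Q ρ^{5/3})/(∫_Q ρ)^{2/3} − S̃·|Q|^{−2/3}·∫_Q ρ. -/

import Mathlib

open MeasureTheory

/-- The open cube of side `L` with lower corner `a` in `ℝ³`. -/
def cube (a : EuclideanSpace ℝ (Fin 3)) (L : ℝ) : Set (EuclideanSpace ℝ (Fin 3)) :=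
  {x | ∀ i, a i < x i ∧ x i < a i + L}

private lemma aux_rpow_sq {x : ℝ} (hx : 0 ≤ x) (r : ℝ) : (x ^ r) ^ 2 = x ^ (r * 2) := by
  rw [← Real.rpow_natCast (x ^ r) 2, ← Real.rpow_mul hx]
  norm_num

private lemma aux_mul_rpow {t : ℝ} (ht : 0 ≤ t) : t * t ^ ((2:ℝ)/3) = t ^ ((5:ℝ)/3) := by
  rcases ht.eq_or_lt with h | h
  · rw [← h, Real.zero_rpow (by norm_num : (2:ℝ)/3 ≠ 0),
      Real.zero_rpow (by norm_num : (5:ℝ)/3 ≠ 0), zero_mul]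
  · rw [show (5:ℝ)/3 = 1 + 2/3 by norm_num, Real.rpow_add h, Real.rpow_one]

private lemma aux_53_le {t : ℝ} (ht : 0 ≤ t) : t ^ ((5:ℝ)/3) ≤ t + t ^ 3 := by
  rcases le_or_gt t 1 with h | h
  · have h1 : t ^ ((5:ℝ)/3) ≤ t ^ (1:ℝ) := by
      rcases ht.eq_or_lt with h0 | h0
      · simp [← h0, Real.zero_rpow]
      · exact Real.rpow_le_rpow_of_exponent_ge h0 h (by norm_num)
    have h2 : (0:ℝ) ≤ t ^ 3 := by positivity
    rw [Real.rpow_one] at h1; linarith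
  · have h1 : t ^ ((5:ℝ)/3) ≤ t ^ (3:ℝ) :=
      Real.rpow_le_rpow_of_exponent_le h.le (by norm_num)
    rw [show (3:ℝ) = ((3:ℕ):ℝ) by norm_num, Real.rpow_natCast] at h1
    linarith [ht]

private lemma aux_pow6 {x y : ℝ} (hx : 0 ≤ x) (hy : 0 ≤ y) : (x + y)^6 ≤ 64*(x^6 + y^6) := by
  have h1 : x + y ≤ 2 * max x y := by
    rcases max_cases x y with ⟨h, h'⟩ | ⟨h, h'⟩ <;> rw [h] <;> linarith
  have h2 : (x+y)^6 ≤ (2 * max x y)^6 := pow_le_pow_left₀ (by linarith) h1 6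
  have h3 : (2 * max x y)^6 = 64 * (max x y)^6 := by ring
  have h4 : (max x y)^6 ≤ x^6 + y^6 := by
    rcases max_cases x y with ⟨h, h'⟩ | ⟨h, h'⟩ <;> rw [h] <;>
      nlinarith [pow_nonneg hx 6, pow_nonneg hy 6]
  nlinarith

private lemma aux_sq_cube (t : ℝ) : (t ^ 2) ^ 3 = |t| ^ 6 := by
  rcases abs_cases t with ⟨h, _⟩ | ⟨h, _⟩ <;> rw [h] <;> ring

private lemma aux_ofReal_pow6 (t : ℝ) :
    ENNReal.ofReal (|t| ^ 6) = ENNReal.ofReal |t| ^ (6:ℝ) := by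
  rw [ENNReal.ofReal_rpow_of_nonneg (abs_nonneg t) (by norm_num),
    show (6:ℝ) = ((6:ℕ):ℝ) by norm_num, Real.rpow_natCast]

set_option maxHeartbeats 1000000 in
/-- Poincaré–Sobolev on a cube implies the local kinetic-energy lower bound
`∫_Q |∇√ρ|² ≥ (S̃/2) (∫_Q ρ^{5/3})/(∫_Q ρ)^{2/3} − S̃ |Q|^{-2/3} ∫_Q ρ`
for `ρ = u²`, `u ≥ 0`. -/
theorem stmt18 (S : ℝ) (hS0 : 0 < S)
    (hPS : ∀ (b : EuclideanSpace ℝ (Fin 3)) (ℓ : ℝ), 0 < ℓ →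
      ∀ v : EuclideanSpace ℝ (Fin 3) → ℝ, DifferentiableOn ℝ v (cube b ℓ) →
      IntegrableOn (fun x => v x ^ 2 + ‖fderiv ℝ v x‖ ^ 2 + |v x| ^ 6) (cube b ℓ) →
      ∫ x in cube b ℓ, ‖fderiv ℝ v x‖ ^ 2 ≥
        S * (∫ x in cube b ℓ,
          |v x - (volume (cube b ℓ)).toReal⁻¹ * ∫ y in cube b ℓ, v y| ^ 6) ^ ((1:ℝ)/3))
    (a : EuclideanSpace ℝ (Fin 3)) (L : ℝ) (hL : 0 < L)
    (u : EuclideanSpace ℝ (Fin 3) → ℝ) (hu0 : ∀ x ∈ cube a L, 0 ≤ u x)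
    (hdiff : DifferentiableOn ℝ u (cube a L))
    (hH1 : IntegrableOn (fun x => u x ^ 2 + ‖fderiv ℝ u x‖ ^ 2 + |u x| ^ 6) (cube a L)) :
    ∫ x in cube a L, ‖fderiv ℝ u x‖ ^ 2 ≥
      S / 2 * (∫ x in cube a L, (u x ^ 2) ^ ((5:ℝ)/3)) /
          (∫ x in cube a L, u x ^ 2) ^ ((2:ℝ)/3) -
        S * (volume (cube a L)).toReal ^ (-(2:ℝ)/3) * ∫ x in cube a L, u x ^ 2 := by
  ---- Geometry of the cube
  have hQopen : IsOpen (cube a L) := by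
    have h : cube a L = ⋂ i : Fin 3,
        ((fun x : EuclideanSpace ℝ (Fin 3) => x i) ⁻¹' Set.Ioo (a i) (a i + L)) := by
      ext x; simp [cube, Set.mem_iInter]
    rw [h]
    exact isOpen_iInter_of_finite fun i =>
      isOpen_Ioo.preimage (EuclideanSpace.proj (𝕜 := ℝ) i).continuous
  have hQmeas : MeasurableSet (cube a L) := hQopen.measurableSet
  have hQne : (cube a L).Nonempty := by
    refine ⟨WithLp.toLp 2 (fun i => a i + L / 2), fun i => ?_⟩
    constructor <;> simp <;> linarith
  have hsub : cube a L ⊆ Metric.closedBall (α := EuclideanSpace ℝ (Fin 3)) a (2 * L) := by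
    intro x hx
    rw [Metric.mem_closedBall, EuclideanSpace.dist_eq]
    have h1 : ∀ i : Fin 3, dist (x i) (a i) ^ 2 ≤ L ^ 2 := by
      intro i
      obtain ⟨h2, h3⟩ := hx i
      rw [Real.dist_eq, sq_abs]
      nlinarith
    have h2 : ∑ i : Fin 3, dist (x i) (a i) ^ 2 ≤ 3 * L ^ 2 := by
      calc ∑ i : Fin 3, dist (x i) (a i) ^ 2 ≤ ∑ _i : Fin 3, L ^ 2 :=
            Finset.sum_le_sum fun i _ => h1 i
        _ = 3 * L ^ 2 := by simp [Finset.sum_const]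
    calc Real.sqrt (∑ i : Fin 3, dist (x i) (a i) ^ 2) ≤ Real.sqrt ((2 * L) ^ 2) :=
          Real.sqrt_le_sqrt (by nlinarith)
      _ = 2 * L := Real.sqrt_sq (by linarith)
  have hpos : 0 < volume (cube a L) := hQopen.measure_pos volume hQne
  have hfin : volume (cube a L) < ⊤ :=
    lt_of_le_of_lt (measure_mono hsub) measure_closedBall_lt_top
  have hV0 : 0 < (volume (cube a L)).toReal := ENNReal.toReal_pos hpos.ne' hfin.ne
  have hVofReal : ENNReal.ofReal (volume (cube a L)).toReal = volume (cube a L) :=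
    ENNReal.ofReal_toReal hfin.ne
  ---- Measurability
  haveI hfinμ : IsFiniteMeasure (volume.restrict (cube a L)) :=
    ⟨by rwa [Measure.restrict_apply_univ]⟩
  have hu_sm : AEStronglyMeasurable u (volume.restrict (cube a L)) :=
    hdiff.continuousOn.aestronglyMeasurable hQmeas
  have hu_ae : AEMeasurable u (volume.restrict (cube a L)) := hu_sm.aemeasurable
  ---- Integrability of the pieces
  have hterm_nn : ∀ x, (0:ℝ) ≤ u x ^ 2 ∧ (0:ℝ) ≤ ‖fderiv ℝ u x‖ ^ 2 ∧ (0:ℝ) ≤ |u x| ^ 6 :=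
    fun x => ⟨sq_nonneg _, by positivity, by positivity⟩
  have hint_sq : Integrable (fun x => u x ^ 2) (volume.restrict (cube a L)) := by
    refine hH1.mono' ((hu_ae.pow_const 2).aestronglyMeasurable) (ae_of_all _ fun x => ?_)
    obtain ⟨h1, h2, h3⟩ := hterm_nn x
    rw [Real.norm_eq_abs, abs_of_nonneg h1]; linarith
  have hint_6 : Integrable (fun x => |u x| ^ 6) (volume.restrict (cube a L)) := by
    refine hH1.mono' (((continuous_abs.measurable.comp_aemeasurable hu_ae).pow_const 6).aestronglyMeasurable) (ae_of_all _ fun x => ?_)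
    obtain ⟨h1, h2, h3⟩ := hterm_nn x
    rw [Real.norm_eq_abs, abs_of_nonneg h3]; linarith
  have hint_u : Integrable u (volume.restrict (cube a L)) := by
    refine (hint_sq.add (integrable_const 1)).mono' hu_sm (ae_of_all _ fun x => ?_)
    rw [Real.norm_eq_abs]
    simp only [Pi.add_apply]
    nlinarith [sq_nonneg (|u x| - 1), sq_abs (u x)]
  have hint_abs : Integrable (fun x => |u x|) (volume.restrict (cube a L)) := hint_u.abs
  have hint_P : Integrable (fun x => (u x ^ 2) ^ ((5:ℝ)/3)) (volume.restrict (cube a L)) := by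
    refine (hint_sq.add hint_6).mono'
      (((Real.continuous_rpow_const (by norm_num)).measurable.comp_aemeasurable
        (hu_ae.pow_const 2)).aestronglyMeasurable) (ae_of_all _ fun x => ?_)
    have h1 := aux_53_le (sq_nonneg (u x))
    rw [aux_sq_cube (u x)] at h1
    rw [Real.norm_eq_abs, abs_of_nonneg (Real.rpow_nonneg (sq_nonneg _) _)]
    simpa using h1
  ---- abbreviations
  set V : ℝ := (volume (cube a L)).toReal with hVdef
  set ub : ℝ := (volume (cube a L)).toReal⁻¹ * ∫ y in cube a L, u y with hub_def
  have hint_sub6 : Integrable (fun x => |u x - ub| ^ 6) (volume.restrict (cube a L)) := by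
    refine ((hint_6.add (integrable_const (|ub| ^ 6))).const_mul 64).mono'
      (((continuous_abs.measurable.comp_aemeasurable (hu_ae.sub aemeasurable_const)).pow_const 6).aestronglyMeasurable)
      (ae_of_all _ fun x => ?_)
    have h1 : |u x - ub| ≤ |u x| + |ub| := abs_sub _ _
    have h2 : |u x - ub| ^ 6 ≤ (|u x| + |ub|) ^ 6 :=
      pow_le_pow_left₀ (abs_nonneg _) h1 6
    have h3 := aux_pow6 (abs_nonneg (u x)) (abs_nonneg ub)
    rw [Real.norm_eq_abs, abs_of_nonneg (by positivity : (0:ℝ) ≤ |u x - ub| ^ 6)]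
    calc |u x - ub| ^ 6 ≤ (|u x| + |ub|) ^ 6 := h2
      _ ≤ 64 * (|u x| ^ 6 + |ub| ^ 6) := h3
  ---- nonnegativity of the integrals
  have hA0 : 0 ≤ ∫ x in cube a L, u x ^ 2 := integral_nonneg fun x => sq_nonneg _
  have hD0 : 0 ≤ ∫ x in cube a L, |u x| ^ 6 := integral_nonneg fun x => by positivity
  have hC0 : 0 ≤ ∫ x in cube a L, |u x - ub| ^ 6 := integral_nonneg fun x => by positivity
  have hP0 : 0 ≤ ∫ x in cube a L, (u x ^ 2) ^ ((5:ℝ)/3) :=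
    integral_nonneg fun x => Real.rpow_nonneg (sq_nonneg _) _
  have hB0 : 0 ≤ ∫ x in cube a L, ‖fderiv ℝ u x‖ ^ 2 := integral_nonneg fun x => by positivity
  ---- lintegral conversions
  have hLA : ∫⁻ x in cube a L, ENNReal.ofReal (u x ^ 2)
      = ENNReal.ofReal (∫ x in cube a L, u x ^ 2) :=
    (ofReal_integral_eq_lintegral_ofReal hint_sq (ae_of_all _ fun x => sq_nonneg _)).symm
  have hLD : ∫⁻ x in cube a L, ENNReal.ofReal (|u x| ^ 6)
      = ENNReal.ofReal (∫ x in cube a L, |u x| ^ 6) :=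
    (ofReal_integral_eq_lintegral_ofReal hint_6 (ae_of_all _ fun x => by positivity)).symm
  have hLC : ∫⁻ x in cube a L, ENNReal.ofReal (|u x - ub| ^ 6)
      = ENNReal.ofReal (∫ x in cube a L, |u x - ub| ^ 6) :=
    (ofReal_integral_eq_lintegral_ofReal hint_sub6 (ae_of_all _ fun x => by positivity)).symm
  have hLP : ∫⁻ x in cube a L, ENNReal.ofReal ((u x ^ 2) ^ ((5:ℝ)/3))
      = ENNReal.ofReal (∫ x in cube a L, (u x ^ 2) ^ ((5:ℝ)/3)) :=
    (ofReal_integral_eq_lintegral_ofReal hint_P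
      (ae_of_all _ fun x => Real.rpow_nonneg (sq_nonneg _) _)).symm
  have hLabs : ∫⁻ x in cube a L, ENNReal.ofReal |u x|
      = ENNReal.ofReal (∫ x in cube a L, |u x|) :=
    (ofReal_integral_eq_lintegral_ofReal hint_abs (ae_of_all _ fun x => abs_nonneg _)).symm
  ---- Step (4): Hölder  P ≤ D^{1/3} A^{2/3}
  have hHold : (∫ x in cube a L, (u x ^ 2) ^ ((5:ℝ)/3)) ≤
      (∫ x in cube a L, |u x| ^ 6) ^ ((1:ℝ)/3) *
      (∫ x in cube a L, u x ^ 2) ^ ((2:ℝ)/3) := by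
    have hconj : Real.HolderConjugate 3 (3/2) := Real.holderConjugate_iff.mpr ⟨by norm_num, by norm_num⟩
    have hF : AEMeasurable (fun x => ENNReal.ofReal (u x ^ 2)) (volume.restrict (cube a L)) :=
      ENNReal.measurable_ofReal.comp_aemeasurable (hu_ae.pow_const 2)
    have hG : AEMeasurable (fun x => ENNReal.ofReal ((u x ^ 2) ^ ((2:ℝ)/3)))
        (volume.restrict (cube a L)) :=
      ENNReal.measurable_ofReal.comp_aemeasurable
        ((Real.continuous_rpow_const (by norm_num)).measurable.comp_aemeasurable
          (hu_ae.pow_const 2))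
    have h := ENNReal.lintegral_mul_le_Lp_mul_Lq (volume.restrict (cube a L)) hconj hF hG
    simp only [Pi.mul_apply] at h
    have e1 : (∫⁻ x in cube a L,
        ENNReal.ofReal (u x ^ 2) * ENNReal.ofReal ((u x ^ 2) ^ ((2:ℝ)/3)))
        = ENNReal.ofReal (∫ x in cube a L, (u x ^ 2) ^ ((5:ℝ)/3)) := by
      rw [← hLP]
      refine lintegral_congr fun x => ?_
      rw [← ENNReal.ofReal_mul (sq_nonneg _), aux_mul_rpow (sq_nonneg _)]
    have e2 : (∫⁻ x in cube a L, ENNReal.ofReal (u x ^ 2) ^ (3:ℝ))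
        = ENNReal.ofReal (∫ x in cube a L, |u x| ^ 6) := by
      rw [← hLD]
      refine lintegral_congr fun x => ?_
      rw [ENNReal.ofReal_rpow_of_nonneg (sq_nonneg _) (by norm_num),
        show (3:ℝ) = ((3:ℕ):ℝ) by norm_num, Real.rpow_natCast, aux_sq_cube]
    have e3 : (∫⁻ x in cube a L, ENNReal.ofReal ((u x ^ 2) ^ ((2:ℝ)/3)) ^ ((3:ℝ)/2))
        = ENNReal.ofReal (∫ x in cube a L, u x ^ 2) := by
      rw [← hLA]
      refine lintegral_congr fun x => ?_
      rw [ENNReal.ofReal_rpow_of_nonneg (Real.rpow_nonneg (sq_nonneg _) _) (by norm_num),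
        ← Real.rpow_mul (sq_nonneg _), show (2:ℝ)/3 * (3/2) = 1 by norm_num, Real.rpow_one]
    rw [e1, e2, e3, show (1:ℝ)/(3/2) = 2/3 by norm_num] at h
    have h' : ENNReal.ofReal (∫ x in cube a L, (u x ^ 2) ^ ((5:ℝ)/3)) ≤
        ENNReal.ofReal ((∫ x in cube a L, |u x| ^ 6) ^ ((1:ℝ)/3) *
          (∫ x in cube a L, u x ^ 2) ^ ((2:ℝ)/3)) := by
      rw [ENNReal.ofReal_mul (Real.rpow_nonneg hD0 _),
        ← ENNReal.ofReal_rpow_of_nonneg hD0 (by norm_num),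
        ← ENNReal.ofReal_rpow_of_nonneg hA0 (by norm_num)]
      exact h
    exact (ENNReal.ofReal_le_ofReal_iff (by positivity)).mp h'
  ---- Step (3): Cauchy–Schwarz  ub² ≤ V⁻¹ A
  have hub2 : ub ^ 2 ≤ V⁻¹ * ∫ x in cube a L, u x ^ 2 := by
    have hconj : Real.HolderConjugate 2 2 := Real.holderConjugate_iff.mpr ⟨by norm_num, by norm_num⟩
    have hF : AEMeasurable (fun x => ENNReal.ofReal |u x|) (volume.restrict (cube a L)) :=
      ENNReal.measurable_ofReal.comp_aemeasurable
        (continuous_abs.measurable.comp_aemeasurable hu_ae)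
    have h := ENNReal.lintegral_mul_le_Lp_mul_Lq (volume.restrict (cube a L)) hconj hF
      (aemeasurable_const (b := (1:ENNReal)))
    simp only [Pi.mul_apply, mul_one, ENNReal.one_rpow] at h
    rw [hLabs] at h
    have e2 : (∫⁻ x in cube a L, ENNReal.ofReal |u x| ^ (2:ℝ))
        = ENNReal.ofReal (∫ x in cube a L, u x ^ 2) := by
      rw [← hLA]
      refine lintegral_congr fun x => ?_
      rw [ENNReal.ofReal_rpow_of_nonneg (abs_nonneg _) (by norm_num),
        show (2:ℝ) = ((2:ℕ):ℝ) by norm_num, Real.rpow_natCast, sq_abs]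
    have e3 : (∫⁻ x in cube a L, (1:ENNReal))
        = ENNReal.ofReal V := by
      rw [lintegral_const, Measure.restrict_apply_univ, one_mul]
      exact hVofReal.symm
    rw [e2, e3] at h
    have h' : (∫ x in cube a L, |u x|) ≤
        (∫ x in cube a L, u x ^ 2) ^ ((1:ℝ)/2) * V ^ ((1:ℝ)/2) := by
      rw [ENNReal.ofReal_rpow_of_nonneg hA0 (by norm_num),
        ENNReal.ofReal_rpow_of_nonneg hV0.le (by norm_num),
        ← ENNReal.ofReal_mul (by positivity)] at h
      exact (ENNReal.ofReal_le_ofReal_iff (by positivity)).mp h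
    have habs : |∫ x in cube a L, u x| ≤ ∫ x in cube a L, |u x| := by
      simpa [Real.norm_eq_abs] using
        norm_integral_le_integral_norm (μ := volume.restrict (cube a L)) u
    have hsq : (∫ x in cube a L, u x) ^ 2 ≤ (∫ x in cube a L, u x ^ 2) * V := by
      have h2 : (∫ x in cube a L, |u x|) ^ 2 ≤
          ((∫ x in cube a L, u x ^ 2) ^ ((1:ℝ)/2) * V ^ ((1:ℝ)/2)) ^ 2 :=
        pow_le_pow_left₀ (integral_nonneg fun x => abs_nonneg _) h' 2
      rw [mul_pow, aux_rpow_sq hA0, aux_rpow_sq hV0.le,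
        show (1:ℝ)/2 * 2 = 1 by norm_num, Real.rpow_one, Real.rpow_one] at h2
      calc (∫ x in cube a L, u x) ^ 2 ≤ (∫ x in cube a L, |u x|) ^ 2 := by
            rw [← sq_abs (∫ x in cube a L, u x)]
            exact pow_le_pow_left₀ (abs_nonneg _) habs 2
        _ ≤ _ := h2
    rw [hub_def, ← hVdef, mul_pow]
    calc V⁻¹ ^ 2 * (∫ y in cube a L, u y) ^ 2
        ≤ V⁻¹ ^ 2 * ((∫ x in cube a L, u x ^ 2) * V) :=
          mul_le_mul_of_nonneg_left hsq (by positivity)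
      _ = V⁻¹ * ∫ x in cube a L, u x ^ 2 := by
          field_simp
  ---- Step (2): Minkowski  D^{1/3} ≤ 2 C^{1/3} + 2 ub² V^{1/3}
  have hM3 : (∫ x in cube a L, |u x| ^ 6) ^ ((1:ℝ)/3) ≤
      2 * (∫ x in cube a L, |u x - ub| ^ 6) ^ ((1:ℝ)/3) + 2 * (ub ^ 2 * V ^ ((1:ℝ)/3)) := by
    have hf : AEMeasurable (fun x => ENNReal.ofReal |u x - ub|)
        (volume.restrict (cube a L)) :=
      ENNReal.measurable_ofReal.comp_aemeasurable
        (continuous_abs.measurable.comp_aemeasurable (hu_ae.sub aemeasurable_const))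
    have hg : AEMeasurable (fun _ : EuclideanSpace ℝ (Fin 3) => ENNReal.ofReal |ub|)
        (volume.restrict (cube a L)) := aemeasurable_const
    have hmink := ENNReal.lintegral_Lp_add_le hf hg (by norm_num : (1:ℝ) ≤ 6)
    simp only [Pi.add_apply] at hmink
    have hpt : ∀ x, ENNReal.ofReal (|u x| ^ 6) ≤
        (ENNReal.ofReal |u x - ub| + ENNReal.ofReal |ub|) ^ (6:ℝ) := fun x => by
      rw [aux_ofReal_pow6]
      refine ENNReal.rpow_le_rpow ?_ (by norm_num)
      rw [← ENNReal.ofReal_add (abs_nonneg _) (abs_nonneg _)]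
      refine ENNReal.ofReal_le_ofReal ?_
      calc |u x| = |(u x - ub) + ub| := by ring_nf
        _ ≤ |u x - ub| + |ub| := abs_add_le _ _
    have hle1 : ENNReal.ofReal (∫ x in cube a L, |u x| ^ 6) ^ ((1:ℝ)/6)
        ≤ (∫⁻ x in cube a L,
            (ENNReal.ofReal |u x - ub| + ENNReal.ofReal |ub|) ^ (6:ℝ)) ^ ((1:ℝ)/6) := by
      refine ENNReal.rpow_le_rpow ?_ (by norm_num)
      rw [← hLD]
      exact lintegral_mono hpt
    have hfs : (∫⁻ x in cube a L, ENNReal.ofReal |u x - ub| ^ (6:ℝ))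
        = ENNReal.ofReal (∫ x in cube a L, |u x - ub| ^ 6) := by
      rw [← hLC]
      exact lintegral_congr fun x => (aux_ofReal_pow6 _).symm
    have hgs : (∫⁻ (_x : EuclideanSpace ℝ (Fin 3)) in cube a L, ENNReal.ofReal |ub| ^ (6:ℝ))
        = ENNReal.ofReal (|ub| ^ 6 * V) := by
      rw [lintegral_const, Measure.restrict_apply_univ, ← hVofReal,
        ← aux_ofReal_pow6, ← ENNReal.ofReal_mul (by positivity)]
    have h6 : ENNReal.ofReal ((∫ x in cube a L, |u x| ^ 6) ^ ((1:ℝ)/6)) ≤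
        ENNReal.ofReal ((∫ x in cube a L, |u x - ub| ^ 6) ^ ((1:ℝ)/6) +
          (|ub| ^ 6 * V) ^ ((1:ℝ)/6)) := by
      rw [← ENNReal.ofReal_rpow_of_nonneg hD0 (by norm_num : (0:ℝ) ≤ 1/6)]
      refine le_trans hle1 (le_trans hmink ?_)
      rw [hfs, hgs, ENNReal.ofReal_add (by positivity) (by positivity),
        ← ENNReal.ofReal_rpow_of_nonneg hC0 (by norm_num : (0:ℝ) ≤ 1/6),
        ← ENNReal.ofReal_rpow_of_nonneg (by positivity) (by norm_num : (0:ℝ) ≤ 1/6)]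
    have hreal : (∫ x in cube a L, |u x| ^ 6) ^ ((1:ℝ)/6) ≤
        (∫ x in cube a L, |u x - ub| ^ 6) ^ ((1:ℝ)/6) + (|ub| ^ 6 * V) ^ ((1:ℝ)/6) :=
      (ENNReal.ofReal_le_ofReal_iff (by positivity)).mp h6
    have hsq := pow_le_pow_left₀ (by positivity) hreal 2
    rw [aux_rpow_sq hD0, show (1:ℝ)/6 * 2 = 1/3 by norm_num] at hsq
    have hsum : ((∫ x in cube a L, |u x - ub| ^ 6) ^ ((1:ℝ)/6) +
        (|ub| ^ 6 * V) ^ ((1:ℝ)/6)) ^ 2 ≤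
        2 * ((∫ x in cube a L, |u x - ub| ^ 6) ^ ((1:ℝ)/6)) ^ 2 +
        2 * ((|ub| ^ 6 * V) ^ ((1:ℝ)/6)) ^ 2 := by
      nlinarith [sq_nonneg ((∫ x in cube a L, |u x - ub| ^ 6) ^ ((1:ℝ)/6) -
        (|ub| ^ 6 * V) ^ ((1:ℝ)/6))]
    rw [aux_rpow_sq hC0, show (1:ℝ)/6 * 2 = 1/3 by norm_num] at hsum
    have hE : ((|ub| ^ 6 * V) ^ ((1:ℝ)/6)) ^ 2 = ub ^ 2 * V ^ ((1:ℝ)/3) := by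
      rw [aux_rpow_sq (by positivity), show (1:ℝ)/6 * 2 = 1/3 by norm_num,
        Real.mul_rpow (by positivity) hV0.le]
      congr 1
      rw [show |ub| ^ 6 = (ub ^ 2) ^ 3 by
            rcases abs_cases ub with ⟨h, _⟩ | ⟨h, _⟩ <;> rw [h] <;> ring,
        ← Real.rpow_natCast (ub ^ 2) 3, ← Real.rpow_mul (sq_nonneg _)]
      norm_num
    rw [hE] at hsum
    linarith [hsq, hsum]
  ---- Step (1): Poincaré–Sobolev
  have h1 := hPS a L hL u hdiff hH1
  rw [← hub_def] at h1
  ---- combine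
  have hCS : ub ^ 2 * V ^ ((1:ℝ)/3) ≤ V ^ (-(2:ℝ)/3) * ∫ x in cube a L, u x ^ 2 := by
    have hVe : V ^ (-(2:ℝ)/3) = V ^ ((1:ℝ)/3) * V⁻¹ := by
      rw [← Real.rpow_neg_one V, ← Real.rpow_add hV0]; norm_num
    have hV13 : (0:ℝ) ≤ V ^ ((1:ℝ)/3) := Real.rpow_nonneg hV0.le _
    calc ub ^ 2 * V ^ ((1:ℝ)/3) ≤ (V⁻¹ * ∫ x in cube a L, u x ^ 2) * V ^ ((1:ℝ)/3) := by
          exact mul_le_mul_of_nonneg_right hub2 hV13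
      _ = V ^ (-(2:ℝ)/3) * ∫ x in cube a L, u x ^ 2 := by rw [hVe]; ring
  rcases hA0.eq_or_lt with hA | hA
  · -- degenerate case  ∫ u² = 0
    have hae : (fun x => u x ^ 2) =ᵐ[volume.restrict (cube a L)] 0 :=
      (integral_eq_zero_iff_of_nonneg (fun x => sq_nonneg _) hint_sq).mp hA.symm
    have hPz : (∫ x in cube a L, (u x ^ 2) ^ ((5:ℝ)/3)) = 0 := by
      rw [integral_eq_zero_iff_of_nonneg (fun x => Real.rpow_nonneg (sq_nonneg _) _) hint_P]
      filter_upwards [hae] with x hx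
      simp only [Pi.zero_apply] at hx ⊢
      rw [hx, Real.zero_rpow (by norm_num : (5:ℝ)/3 ≠ 0)]
    rw [hPz, ← hA]
    simpa using hB0
  · -- main case  ∫ u² > 0
    have hA23 : (0:ℝ) < (∫ x in cube a L, u x ^ 2) ^ ((2:ℝ)/3) := Real.rpow_pos_of_pos hA _
    have hdiv : S / 2 * (∫ x in cube a L, (u x ^ 2) ^ ((5:ℝ)/3)) /
        (∫ x in cube a L, u x ^ 2) ^ ((2:ℝ)/3) ≤
        S / 2 * ((∫ x in cube a L, |u x| ^ 6) ^ ((1:ℝ)/3)) := by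
      rw [div_le_iff₀ hA23]
      calc S / 2 * (∫ x in cube a L, (u x ^ 2) ^ ((5:ℝ)/3))
          ≤ S / 2 * ((∫ x in cube a L, |u x| ^ 6) ^ ((1:ℝ)/3) *
            (∫ x in cube a L, u x ^ 2) ^ ((2:ℝ)/3)) :=
            mul_le_mul_of_nonneg_left hHold (by linarith)
        _ = S / 2 * (∫ x in cube a L, |u x| ^ 6) ^ ((1:ℝ)/3) *
            (∫ x in cube a L, u x ^ 2) ^ ((2:ℝ)/3) := by ring
    have hstep : S / 2 * ((∫ x in cube a L, |u x| ^ 6) ^ ((1:ℝ)/3)) ≤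
        S * (∫ x in cube a L, |u x - ub| ^ 6) ^ ((1:ℝ)/3) +
        S * (V ^ (-(2:ℝ)/3) * ∫ x in cube a L, u x ^ 2) := by
      have h3 := mul_le_mul_of_nonneg_left hCS hS0.le
      calc S / 2 * ((∫ x in cube a L, |u x| ^ 6) ^ ((1:ℝ)/3))
          ≤ S / 2 * (2 * (∫ x in cube a L, |u x - ub| ^ 6) ^ ((1:ℝ)/3) +
            2 * (ub ^ 2 * V ^ ((1:ℝ)/3))) :=
            mul_le_mul_of_nonneg_left hM3 (by linarith)
        _ = S * (∫ x in cube a L, |u x - ub| ^ 6) ^ ((1:ℝ)/3) +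
            S * (ub ^ 2 * V ^ ((1:ℝ)/3)) := by ring
        _ ≤ S * (∫ x in cube a L, |u x - ub| ^ 6) ^ ((1:ℝ)/3) +
            S * (V ^ (-(2:ℝ)/3) * ∫ x in cube a L, u x ^ 2) := by linarith
    linarith [h1, hdiv, hstep]
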